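/- arXiv:cs/0308021 — 6 statements merged into one kernel-verified Lean document; each statement's English description precedes it below -/
import Mathlib

section
/- Let p ≥ 1 be an integer and let f_{i,j} ∈ ℝ² for 0 ≤ i ≤ p, 0 ≤ j ≤ p. Define F : ℝ² → ℝ² by F(ξ,η) = Σ_{i=0}^{p} Σ_{j=0}^{p} f_{i,j} (1−ξ)^{p−i} ξ^i (1−η)^{p−j} η^j · (p!/(i!(p−i)!)) · (p!/(j!(p−j)!)). Let G_ξ = {p(f_{i+1,j} − f_{i,j}) : 0 ≤ i ≤ p−1, 0 ≤ j ≤ p} and G_η = {p(f_{i,j+1} − f_{i,j}) : 0 ≤ i ≤ p, 0 ≤ j ≤ p−1}. Suppose that for every u in the convex hull of G_ξ and every v in the convex hull of G_η, the 2×2 matrix with columns u and v is invertible. Then for every (ξ,η) ∈ [0,1] × [0,1], the Jacobian matrix of F at (ξ,η) is invertible. -/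
open Finset

noncomputable def bb (n i : ℕ) (t : ℝ) : ℝ := (n.choose i : ℝ) * (1 - t) ^ (n - i) * t ^ i

lemma bb_nonneg {n i : ℕ} {t : ℝ} (h0 : 0 ≤ t) (h1 : t ≤ 1) : 0 ≤ bb n i t := by
  have h : (0:ℝ) ≤ 1 - t := by linarith
  unfold bb; positivity

lemma bb_sum (n : ℕ) (t : ℝ) : ∑ i ∈ range (n + 1), bb n i t = 1 := by
  have h := add_pow t (1 - t) n
  have ht : t + (1 - t) = 1 := by ring
  rw [ht, one_pow] at h
  calc ∑ i ∈ range (n + 1), bb n i t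
      = ∑ i ∈ range (n + 1), t ^ i * (1 - t) ^ (n - i) * (n.choose i : ℝ) := by
        refine sum_congr rfl fun i _ => by unfold bb; ring
    _ = 1 := h.symm

lemma hasDerivAt_bb (n i : ℕ) (t : ℝ) :
    HasDerivAt (fun s => bb n i s)
      ((n.choose i : ℝ) * ((↑(n - i) * (1 - t) ^ (n - i - 1) * (-1)) * t ^ i
        + (1 - t) ^ (n - i) * (↑i * t ^ (i - 1)))) t := by
  have h1 : HasDerivAt (fun s : ℝ => (1 - s) ^ (n - i))
      (↑(n - i) * (1 - t) ^ (n - i - 1) * (-1)) t := by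
    have hinner : HasDerivAt (fun s : ℝ => 1 - s) (-1) t := by
      simpa using (hasDerivAt_id t).const_sub 1
    exact (hasDerivAt_pow (n - i) (1 - t)).comp t hinner
  have h2 : HasDerivAt (fun s : ℝ => s ^ i) (↑i * t ^ (i - 1)) t := hasDerivAt_pow i t
  have h3 := (h1.mul h2).const_mul ((n.choose i : ℝ))
  have hfn : (fun s => bb n i s) = fun s => (n.choose i : ℝ) * ((1 - s) ^ (n - i) * s ^ i) := by
    funext s; unfold bb; ring
  rw [hfn]
  exact h3

variable {E : Type*} [NormedAddCommGroup E] [NormedSpace ℝ E]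

lemma choose_cast_succ (p i : ℕ) (hp : 1 ≤ p) :
    (p.choose (i + 1) : ℝ) * (i + 1) = (p : ℝ) * ((p - 1).choose i : ℝ) := by
  have h : p * (p - 1).choose i = p.choose (i + 1) * (i + 1) := by
    have := Nat.add_one_mul_choose_eq (p - 1) i
    simpa [Nat.succ_eq_add_one, Nat.sub_add_cancel hp] using this
  exact_mod_cast congrArg (Nat.cast (R := ℝ)) h.symm

lemma choose_cast_sub (p i : ℕ) (hp : 1 ≤ p) (hip : i < p) :
    (p.choose i : ℝ) * ((p : ℝ) - i) = (p : ℝ) * ((p - 1).choose i : ℝ) := by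
  have h1 : p.choose i * (p - i) = p.choose (i + 1) * (i + 1) :=
    (Nat.choose_succ_right_eq p i).symm
  have h2 : p * (p - 1).choose i = p.choose (i + 1) * (i + 1) := by
    have := Nat.add_one_mul_choose_eq (p - 1) i
    simpa [Nat.succ_eq_add_one, Nat.sub_add_cancel hp] using this
  have h : p.choose i * (p - i) = p * (p - 1).choose i := h1.trans h2.symm
  have hc : ((p.choose i * (p - i) : ℕ) : ℝ) = ((p * (p - 1).choose i : ℕ) : ℝ) := by
    exact_mod_cast congrArg (Nat.cast (R := ℝ)) h
  push_cast [Nat.cast_sub hip.le] at hc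
  linarith [hc]

lemma key (p : ℕ) (hp : 1 ≤ p) (a : ℕ → E) (t : ℝ) :
    HasDerivAt (fun s => ∑ i ∈ range (p + 1), bb p i s • a i)
      (∑ i ∈ range p, bb (p - 1) i t • ((p : ℝ) • (a (i + 1) - a i))) t := by
  have H : HasDerivAt (fun s => ∑ i ∈ range (p + 1), bb p i s • a i)
      (∑ i ∈ range (p + 1),
        ((p.choose i : ℝ) * ((↑(p - i) * (1 - t) ^ (p - i - 1) * (-1)) * t ^ i
          + (1 - t) ^ (p - i) * (↑i * t ^ (i - 1)))) • a i) t :=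
    HasDerivAt.fun_sum fun i _ => (hasDerivAt_bb p i t).smul_const (a i)
  have heq : ∑ i ∈ range (p + 1),
        ((p.choose i : ℝ) * ((↑(p - i) * (1 - t) ^ (p - i - 1) * (-1)) * t ^ i
          + (1 - t) ^ (p - i) * (↑i * t ^ (i - 1)))) • a i
      = ∑ i ∈ range p, bb (p - 1) i t • ((p : ℝ) • (a (i + 1) - a i)) := by
    set P : ℕ → ℝ := fun i => (p.choose i : ℝ) * ↑i * t ^ (i - 1) * (1 - t) ^ (p - i) with hP
    set Q : ℕ → ℝ := fun i => (p.choose i : ℝ) * ↑(p - i) * (1 - t) ^ (p - i - 1) * t ^ i with hQ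
    have hsplit : ∀ i, ((p.choose i : ℝ) * ((↑(p - i) * (1 - t) ^ (p - i - 1) * (-1)) * t ^ i
          + (1 - t) ^ (p - i) * (↑i * t ^ (i - 1)))) • a i = P i • a i - Q i • a i := by
      intro i
      rw [← sub_smul]
      congr 1
      simp only [hP, hQ]
      ring
    rw [Finset.sum_congr rfl fun i _ => hsplit i, Finset.sum_sub_distrib]
    have hPsum : ∑ i ∈ range (p + 1), P i • a i
        = ∑ i ∈ range p, ((p : ℝ) * bb (p - 1) i t) • a (i + 1) := by
      rw [Finset.sum_range_succ']
      have hP0 : P 0 • a 0 = 0 := by simp [hP]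
      rw [hP0, add_zero]
      refine Finset.sum_congr rfl fun i hi => ?_
      congr 1
      have he : p - (i + 1) = p - 1 - i := by omega
      simp only [hP]
      rw [he]
      unfold bb
      push_cast
      have := choose_cast_succ p i hp
      push_cast at this
      linear_combination (t ^ i * (1 - t) ^ (p - 1 - i)) * this
    have hQsum : ∑ i ∈ range (p + 1), Q i • a i
        = ∑ i ∈ range p, ((p : ℝ) * bb (p - 1) i t) • a i := by
      rw [Finset.sum_range_succ]
      have hQp : Q p • a p = 0 := by simp [hQ]
      rw [hQp, add_zero]
      refine Finset.sum_congr rfl fun i hi => ?_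
      congr 1
      have hip : i < p := Finset.mem_range.mp hi
      have he : p - i - 1 = p - 1 - i := by omega
      simp only [hQ]
      rw [he, Nat.cast_sub hip.le]
      unfold bb
      have := choose_cast_sub p i hp hip
      linear_combination ((1 - t) ^ (p - 1 - i) * t ^ i) * this
    rw [hPsum, hQsum, ← Finset.sum_sub_distrib]
    refine Finset.sum_congr rfl fun i hi => ?_
    rw [← smul_sub, smul_smul]
    congr 1
    ring
  exact heq ▸ H

/-- For a tensor-product Bernstein–Bézier mapping `F : ℝ² → ℝ²` of degree `p`
in each coordinate on the unit square, if every matrix `[u, v]` with `u ∈ hull G_ξ` and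
`v ∈ hull G_η` is invertible, then the Jacobian of `F` is invertible everywhere on `[0,1]²`. -/
theorem jacobian_invertible_of_hull_condition_square
    (p : ℕ) (hp : 1 ≤ p) (f : ℕ → ℕ → EuclideanSpace ℝ (Fin 2))
    (F : ℝ × ℝ → EuclideanSpace ℝ (Fin 2))
    (hF : F = fun x => ∑ i ∈ Finset.range (p + 1), ∑ j ∈ Finset.range (p + 1),
      ((1 - x.1) ^ (p - i) * x.1 ^ i * (1 - x.2) ^ (p - j) * x.2 ^ j *
        ((Nat.factorial p : ℝ) / ((Nat.factorial i : ℝ) * (Nat.factorial (p - i) : ℝ))) *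
        ((Nat.factorial p : ℝ) / ((Nat.factorial j : ℝ) * (Nat.factorial (p - j) : ℝ)))) • f i j)
    (Gξ Gη : Set (EuclideanSpace ℝ (Fin 2)))
    (hGξ : Gξ = {g | ∃ i ≤ p - 1, ∃ j ≤ p, g = (p : ℝ) • (f (i + 1) j - f i j)})
    (hGη : Gη = {g | ∃ i ≤ p, ∃ j ≤ p - 1, g = (p : ℝ) • (f i (j + 1) - f i j)})
    (hcond : ∀ u ∈ convexHull ℝ Gξ, ∀ v ∈ convexHull ℝ Gη,
      IsUnit !![u 0, v 0; u 1, v 1])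
    (x : ℝ × ℝ) (hx1 : x.1 ∈ Set.Icc (0 : ℝ) 1) (hx2 : x.2 ∈ Set.Icc (0 : ℝ) 1) :
    IsUnit !![fderiv ℝ F x (1, 0) 0, fderiv ℝ F x (0, 1) 0;
              fderiv ℝ F x (1, 0) 1, fderiv ℝ F x (0, 1) 1] := by
  -- rewrite F in terms of bb
  have hF' : F = fun y : ℝ × ℝ => ∑ i ∈ range (p + 1), ∑ j ∈ range (p + 1),
      (bb p i y.1 * bb p j y.2) • f i j := by
    rw [hF]; funext y
    refine Finset.sum_congr rfl fun i hi => Finset.sum_congr rfl fun j hj => ?_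
    have hi' : i ≤ p := by have := Finset.mem_range.mp hi; omega
    have hj' : j ≤ p := by have := Finset.mem_range.mp hj; omega
    congr 1
    rw [← Nat.cast_choose ℝ hi', ← Nat.cast_choose ℝ hj']
    unfold bb; ring
  -- differentiability
  have hdiff : Differentiable ℝ F := by
    rw [hF']
    apply Differentiable.fun_sum; intro i _
    apply Differentiable.fun_sum; intro j _
    apply Differentiable.smul_const
    have h1 : Differentiable ℝ (fun y : ℝ × ℝ => bb p i y.1) := by
      unfold bb; fun_prop
    have h2 : Differentiable ℝ (fun y : ℝ × ℝ => bb p j y.2) := by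
      unfold bb; fun_prop
    exact h1.mul h2
  -- partial derivatives as HasDerivAt along lines
  have hline1 : HasDerivAt (fun t => F (t, x.2)) (fderiv ℝ F x (1, 0)) x.1 := by
    have h := (hdiff x).hasFDerivAt
    have hg : HasDerivAt (fun t : ℝ => (t, x.2)) ((1 : ℝ), (0 : ℝ)) x.1 :=
      (hasDerivAt_id x.1).prodMk (hasDerivAt_const x.1 x.2)
    have h' : HasFDerivAt F (fderiv ℝ F x) ((fun t : ℝ => (t, x.2)) x.1) := by
      simpa using h
    exact h'.comp_hasDerivAt x.1 hg
  have hline2 : HasDerivAt (fun t => F (x.1, t)) (fderiv ℝ F x (0, 1)) x.2 := by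
    have h := (hdiff x).hasFDerivAt
    have hg : HasDerivAt (fun t : ℝ => (x.1, t)) ((0 : ℝ), (1 : ℝ)) x.2 :=
      (hasDerivAt_const x.2 x.1).prodMk (hasDerivAt_id x.2)
    have h' : HasFDerivAt F (fderiv ℝ F x) ((fun t : ℝ => (x.1, t)) x.2) := by
      simpa using h
    exact h'.comp_hasDerivAt x.2 hg
  -- compute partial derivative in ξ
  set u : EuclideanSpace ℝ (Fin 2) := ∑ i ∈ range p, ∑ j ∈ range (p + 1),
    (bb (p - 1) i x.1 * bb p j x.2) • ((p : ℝ) • (f (i + 1) j - f i j)) with hu_def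
  set v : EuclideanSpace ℝ (Fin 2) := ∑ i ∈ range (p + 1), ∑ j ∈ range p,
    (bb p i x.1 * bb (p - 1) j x.2) • ((p : ℝ) • (f i (j + 1) - f i j)) with hv_def
  have hder1 : HasDerivAt (fun t => F (t, x.2)) u x.1 := by
    have hFt : (fun t => F (t, x.2))
        = fun t => ∑ i ∈ range (p + 1), bb p i t • (∑ j ∈ range (p + 1), bb p j x.2 • f i j) := by
      funext t; rw [hF']
      simp only [Finset.smul_sum, smul_smul]
    rw [hFt]
    have hk := key p hp (fun i => ∑ j ∈ range (p + 1), bb p j x.2 • f i j) x.1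
    refine hk.congr_deriv (Eq.symm ?_)
    rw [hu_def]
    refine Finset.sum_congr rfl fun i hi => ?_
    rw [← Finset.sum_sub_distrib, Finset.smul_sum, Finset.smul_sum]
    refine Finset.sum_congr rfl fun j _ => ?_
    rw [← smul_sub]
    simp only [smul_smul]
    congr 1; ring
  have hder2 : HasDerivAt (fun t => F (x.1, t)) v x.2 := by
    have hFt : (fun t => F (x.1, t))
        = fun t => ∑ j ∈ range (p + 1), bb p j t • (∑ i ∈ range (p + 1), bb p i x.1 • f i j) := by
      funext t; rw [hF']
      dsimp only
      rw [Finset.sum_comm]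
      simp only [Finset.smul_sum, smul_smul]
      refine Finset.sum_congr rfl fun j _ => Finset.sum_congr rfl fun i _ => ?_
      congr 1; ring
    rw [hFt]
    have hk := key p hp (fun j => ∑ i ∈ range (p + 1), bb p i x.1 • f i j) x.2
    refine hk.congr_deriv (Eq.symm ?_)
    rw [hv_def, Finset.sum_comm]
    refine Finset.sum_congr rfl fun j hj => ?_
    rw [← Finset.sum_sub_distrib, Finset.smul_sum, Finset.smul_sum]
    refine Finset.sum_congr rfl fun i _ => ?_
    rw [← smul_sub]
    simp only [smul_smul]
    congr 1; ring
  have he1 : fderiv ℝ F x (1, 0) = u := hline1.unique hder1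
  have he2 : fderiv ℝ F x (0, 1) = v := hline2.unique hder2
  -- convex hull memberships
  obtain ⟨hx10, hx11⟩ := hx1
  obtain ⟨hx20, hx21⟩ := hx2
  have hrp : p - 1 + 1 = p := Nat.sub_add_cancel hp
  have hu_mem : u ∈ convexHull ℝ Gξ := by
    rw [hGξ, hu_def]
    have heq : ∑ i ∈ range p, ∑ j ∈ range (p + 1),
          (bb (p - 1) i x.1 * bb p j x.2) • ((p : ℝ) • (f (i + 1) j - f i j))
        = (range p ×ˢ range (p + 1)).centerMass
            (fun q => bb (p - 1) q.1 x.1 * bb p q.2 x.2)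
            (fun q => (p : ℝ) • (f (q.1 + 1) q.2 - f q.1 q.2)) := by
      rw [Finset.centerMass_eq_of_sum_1, Finset.sum_product]
      rw [Finset.sum_product]; dsimp only
      rw [← Finset.sum_mul_sum]
      rw [show range p = range (p - 1 + 1) by rw [hrp], bb_sum, bb_sum, one_mul]
    rw [heq]
    refine Finset.centerMass_mem_convexHull _ (fun q _ => ?_) ?_ (fun q hq => ?_)
    · exact mul_nonneg (bb_nonneg hx10 hx11) (bb_nonneg hx20 hx21)
    · rw [Finset.sum_product]; dsimp only
      rw [← Finset.sum_mul_sum,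
        show range p = range (p - 1 + 1) by rw [hrp], bb_sum, bb_sum, one_mul]
      norm_num
    · rw [Finset.mem_product, Finset.mem_range, Finset.mem_range] at hq
      exact ⟨q.1, by omega, q.2, by omega, rfl⟩
  have hv_mem : v ∈ convexHull ℝ Gη := by
    rw [hGη, hv_def]
    have heq : ∑ i ∈ range (p + 1), ∑ j ∈ range p,
          (bb p i x.1 * bb (p - 1) j x.2) • ((p : ℝ) • (f i (j + 1) - f i j))
        = (range (p + 1) ×ˢ range p).centerMass
            (fun q => bb p q.1 x.1 * bb (p - 1) q.2 x.2)
            (fun q => (p : ℝ) • (f q.1 (q.2 + 1) - f q.1 q.2)) := by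
      rw [Finset.centerMass_eq_of_sum_1, Finset.sum_product]
      rw [Finset.sum_product]; dsimp only
      rw [← Finset.sum_mul_sum]
      rw [show range p = range (p - 1 + 1) by rw [hrp], bb_sum, bb_sum, one_mul]
    rw [heq]
    refine Finset.centerMass_mem_convexHull _ (fun q _ => ?_) ?_ (fun q hq => ?_)
    · exact mul_nonneg (bb_nonneg hx10 hx11) (bb_nonneg hx20 hx21)
    · rw [Finset.sum_product]; dsimp only
      rw [← Finset.sum_mul_sum,
        show range p = range (p - 1 + 1) by rw [hrp], bb_sum, bb_sum, one_mul]
      norm_num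
    · rw [Finset.mem_product, Finset.mem_range, Finset.mem_range] at hq
      exact ⟨q.1, by omega, q.2, by omega, rfl⟩
  rw [he1, he2]
  exact hcond u hu_mem v hv_mem
end

section
/- Let A and B be nonempty finite sets of vectors in ℝ². Then the following are equivalent: (I) for every u in the convex hull of A and every v in the convex hull of B, the vectors u and v are linearly independent (equivalently, the 2×2 matrix [u, v] is invertible); (II) there exists a vector h ∈ ℝ² such that ⟨h, f⟩ > 0 for all f ∈ A ∪ B, and there exists a vector h̄ ∈ ℝ² such that ⟨h̄, f⟩ > 0 for all f ∈ A and ⟨h̄, f⟩ < 0 for all f ∈ B. -/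
open scoped RealInnerProductSpace

private lemma gordan_aux {F : Set (EuclideanSpace ℝ (Fin 2))} (hF : F.Finite)
    (h0 : (0 : EuclideanSpace ℝ (Fin 2)) ∉ convexHull ℝ F) :
    ∃ h : EuclideanSpace ℝ (Fin 2), ∀ f ∈ F, 0 < ⟪h, f⟫ := by
  obtain ⟨f, u, hfu, hub⟩ := geometric_hahn_banach_point_closed
    (convex_convexHull ℝ F) (hF.isCompact_convexHull (𝕜 := ℝ)).isClosed h0
  refine ⟨(InnerProductSpace.toDual ℝ _).symm f, fun x hx => ?_⟩
  have hx' : x ∈ convexHull ℝ F := subset_convexHull ℝ F hx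
  have := hub x hx'
  rw [InnerProductSpace.toDual_symm_apply]
  simp only [map_zero] at hfu
  linarith

private lemma hull_pos {h : EuclideanSpace ℝ (Fin 2)} {S : Set (EuclideanSpace ℝ (Fin 2))}
    (hS : ∀ f ∈ S, 0 < ⟪h, f⟫) {u : EuclideanSpace ℝ (Fin 2)} (hu : u ∈ convexHull ℝ S) :
    0 < ⟪h, u⟫ := by
  have hlin : IsLinearMap ℝ (fun x : EuclideanSpace ℝ (Fin 2) => ⟪h, x⟫) :=
    ⟨fun x y => inner_add_right h x y, fun c x => real_inner_smul_right h x c⟩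
  exact convexHull_min hS (convex_halfSpace_gt hlin 0) hu

/-- For nonempty finite sets `A, B ⊆ ℝ²`, every pair `(u, v)` with
`u ∈ hull A`, `v ∈ hull B` is linearly independent if and only if there is a vector `h`
with `⟨h, f⟩ > 0` on `A ∪ B` and a vector `h̄` with `⟨h̄, f⟩ > 0` on `A` and `⟨h̄, f⟩ < 0`
on `B`. -/
theorem hull_independence_iff_halfspace_separation_2d
    (A B : Set (EuclideanSpace ℝ (Fin 2)))
    (hAfin : A.Finite) (hBfin : B.Finite) (hAne : A.Nonempty) (hBne : B.Nonempty) :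
    (∀ u ∈ convexHull ℝ A, ∀ v ∈ convexHull ℝ B, LinearIndependent ℝ ![u, v]) ↔
      ((∃ h : EuclideanSpace ℝ (Fin 2), ∀ f ∈ A ∪ B, 0 < ⟪h, f⟫) ∧
       (∃ hbar : EuclideanSpace ℝ (Fin 2),
          (∀ f ∈ A, 0 < ⟪hbar, f⟫) ∧ (∀ f ∈ B, ⟪hbar, f⟫ < 0))) := by
  constructor
  · intro hind
    have key : ∀ u ∈ convexHull ℝ A, ∀ v ∈ convexHull ℝ B, ∀ s t : ℝ,
        s • u + t • v = 0 → s = 0 ∧ t = 0 := fun u hu v hv =>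
      (LinearIndependent.pair_iff).mp (hind u hu v hv)
    constructor
    · refine gordan_aux (hAfin.union hBfin) ?_
      intro h0
      rw [convexHull_union hAne hBne, mem_convexJoin] at h0
      obtain ⟨u, hu, v, hv, a, b, ha, hb, hab, hsum⟩ := h0
      obtain ⟨ha0, hb0⟩ := key u hu v hv a b hsum
      linarith
    · have hBne' : (Neg.neg '' B).Nonempty := hBne.image _
      have hnot : (0 : EuclideanSpace ℝ (Fin 2)) ∉ convexHull ℝ (A ∪ Neg.neg '' B) := by
        intro h0
        rw [convexHull_union hAne hBne', mem_convexJoin] at h0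
        obtain ⟨u, hu, w, hw, a, b, ha, hb, hab, hsum⟩ := h0
        have hw' : -w ∈ convexHull ℝ B := by
          have himg : (Neg.neg '' B) = -B := by ext x; simp [Set.mem_neg]
          rw [himg, convexHull_neg, Set.mem_neg] at hw
          exact hw
        have hsum' : a • u + (-b) • (-w) = 0 := by
          rw [smul_neg, neg_smul, neg_neg]; exact hsum
        obtain ⟨ha0, hb0⟩ := key u hu (-w) hw' a (-b) hsum'
        linarith
      obtain ⟨hbar, hh⟩ := gordan_aux (hAfin.union (hBfin.image _)) hnot
      refine ⟨hbar, fun f hf => hh f (Or.inl hf), fun f hf => ?_⟩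
      have := hh (-f) (Or.inr ⟨f, hf, rfl⟩)
      rw [inner_neg_right] at this
      linarith
  · rintro ⟨⟨h, hh⟩, ⟨hbar, hbA, hbB⟩⟩ u hu v hv
    have hau : 0 < ⟪h, u⟫ := hull_pos (fun f hf => hh f (Or.inl hf)) hu
    have hbv : 0 < ⟪h, v⟫ := hull_pos (fun f hf => hh f (Or.inr hf)) hv
    have hcu : 0 < ⟪hbar, u⟫ := hull_pos hbA hu
    have hdv : ⟪hbar, v⟫ < 0 := by
      have : 0 < ⟪-hbar, v⟫ := hull_pos (fun f hf => by
        rw [inner_neg_left]; linarith [hbB f hf]) hv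
      rw [inner_neg_left] at this; linarith
    rw [LinearIndependent.pair_iff]
    intro s t hst
    have e1 : s * ⟪h, u⟫ + t * ⟪h, v⟫ = 0 := by
      have e : ⟪h, s • u + t • v⟫ = 0 := by rw [hst, inner_zero_right]
      rwa [inner_add_right, real_inner_smul_right, real_inner_smul_right] at e
    have e2 : s * ⟪hbar, u⟫ + t * ⟪hbar, v⟫ = 0 := by
      have e : ⟪hbar, s • u + t • v⟫ = 0 := by rw [hst, inner_zero_right]
      rwa [inner_add_right, real_inner_smul_right, real_inner_smul_right] at e
    constructor <;> nlinarith [mul_pos hau hbv, mul_pos hau hcu, mul_pos hbv hcu,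
      mul_neg_of_pos_of_neg hau hdv, mul_neg_of_pos_of_neg hbv hdv,
      mul_self_nonneg s, mul_self_nonneg t]
end

section
/- Let A, B, and C be nonempty finite sets of vectors in ℝ³. Then the following are equivalent: (I) for every u in the convex hull of A, every v in the convex hull of B, and every w in the convex hull of C, the 3×3 matrix with columns u, v, w is invertible (equivalently, u, v, w are linearly independent); (II) there exist vectors h₁, h₂, h₃, h₄ ∈ ℝ³ such that: ⟨h₁, f⟩ > 0 for all f ∈ A ∪ B ∪ C; ⟨h₂, f⟩ > 0 for all f ∈ A ∪ B and ⟨h₂, f⟩ < 0 for all f ∈ C; ⟨h₃, f⟩ > 0 for all f ∈ A ∪ C and ⟨h₃, f⟩ < 0 for all f ∈ B; and ⟨h₄, f⟩ > 0 for all f ∈ A and ⟨h₄, f⟩ < 0 for all f ∈ B ∪ C. -/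
open scoped RealInnerProductSpace Pointwise
open Set

private lemma triple_zero {a b c x y z : ℝ} (hx : 0 < x) (hy : 0 < y) (hz : 0 < z)
    (ha : 0 ≤ a) (hb : 0 ≤ b) (hc : 0 ≤ c) (h : a * x + b * y + c * z = 0) :
    a = 0 ∧ b = 0 ∧ c = 0 := by
  have h1 : a * x = 0 := by nlinarith [mul_nonneg ha hx.le, mul_nonneg hb hy.le, mul_nonneg hc hz.le]
  have h2 : b * y = 0 := by nlinarith [mul_nonneg ha hx.le, mul_nonneg hb hy.le, mul_nonneg hc hz.le]
  have h3 : c * z = 0 := by nlinarith [mul_nonneg ha hx.le, mul_nonneg hb hy.le, mul_nonneg hc hz.le]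
  refine ⟨?_, ?_, ?_⟩
  · rcases mul_eq_zero.1 h1 with h | h; exact h; linarith
  · rcases mul_eq_zero.1 h2 with h | h; exact h; linarith
  · rcases mul_eq_zero.1 h3 with h | h; exact h; linarith

private lemma inner_pos_hull {h : EuclideanSpace ℝ (Fin 3)} {s : Set (EuclideanSpace ℝ (Fin 3))}
    (hs : ∀ f ∈ s, 0 < ⟪h, f⟫) {u : EuclideanSpace ℝ (Fin 3)}
    (hu : u ∈ convexHull ℝ s) : 0 < ⟪h, u⟫ := by
  have hlin : IsLinearMap ℝ (fun x : EuclideanSpace ℝ (Fin 3) => ⟪h, x⟫) :=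
    ⟨fun x y => inner_add_right h x y, fun c x => real_inner_smul_right h x c⟩
  have := convexHull_min (s := s) (t := {x | (0:ℝ) < ⟪h, x⟫}) hs (convex_halfSpace_gt hlin 0)
  exact this hu

/-- Decomposition of a point of the hull of a triple union. -/
private lemma zero_mem_decomp {A B C : Set (EuclideanSpace ℝ (Fin 3))}
    (hAne : A.Nonempty) (hBne : B.Nonempty) (hCne : C.Nonempty)
    (h0 : (0 : EuclideanSpace ℝ (Fin 3)) ∈ convexHull ℝ (A ∪ B ∪ C)) :
    ∃ u ∈ convexHull ℝ A, ∃ v ∈ convexHull ℝ B, ∃ w ∈ convexHull ℝ C,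
      ∃ a b c : ℝ, 0 ≤ a ∧ 0 ≤ b ∧ 0 ≤ c ∧ a + b + c = 1 ∧
        a • u + b • v + c • w = 0 := by
  rw [convexHull_union (hAne.mono subset_union_left) hCne, mem_convexJoin] at h0
  obtain ⟨p, hp, q, hq, hseg⟩ := h0
  rw [convexHull_union hAne hBne, mem_convexJoin] at hp
  obtain ⟨u, hu, v, hv, hpseg⟩ := hp
  obtain ⟨s, t, hs, ht, hst, hpq⟩ := hseg
  obtain ⟨s', t', hs', ht', hst', hp'⟩ := hpseg
  refine ⟨u, hu, v, hv, q, hq, s * s', s * t', t, by positivity, by positivity, ht, ?_, ?_⟩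
  · nlinarith
  · rw [← hpq, ← hp']
    module

private lemma key_sep {A B C : Set (EuclideanSpace ℝ (Fin 3))}
    (hAfin : A.Finite) (hBfin : B.Finite) (hCfin : C.Finite)
    (hAne : A.Nonempty) (hBne : B.Nonempty) (hCne : C.Nonempty)
    (H : ∀ u ∈ convexHull ℝ A, ∀ v ∈ convexHull ℝ B, ∀ w ∈ convexHull ℝ C,
        LinearIndependent ℝ ![u, v, w])
    (σ τ : ℝ) (hσ : σ = 1 ∨ σ = -1) (hτ : τ = 1 ∨ τ = -1) :
    ∃ h : EuclideanSpace ℝ (Fin 3), (∀ f ∈ A, 0 < ⟪h, f⟫) ∧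
      (∀ f ∈ B, 0 < σ * ⟪h, f⟫) ∧ (∀ f ∈ C, 0 < τ * ⟪h, f⟫) := by
  have hσ0 : σ ≠ 0 := by rcases hσ with h | h <;> simp [h]
  have hτ0 : τ ≠ 0 := by rcases hτ with h | h <;> simp [h]
  set S : Set (EuclideanSpace ℝ (Fin 3)) := A ∪ σ • B ∪ τ • C with hS
  have hSfin : S.Finite := ((hAfin.union hBfin.smul_set).union hCfin.smul_set)
  have h0 : (0 : EuclideanSpace ℝ (Fin 3)) ∉ convexHull ℝ S := by
    intro h0
    obtain ⟨u, hu, v', hv', w', hw', a, b, c, ha, hb, hc, habc, heq⟩ :=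
      zero_mem_decomp hAne (hBne.smul_set) (hCne.smul_set) h0
    rw [convexHull_smul] at hv' hw'
    obtain ⟨v, hv, rfl⟩ := hv'
    obtain ⟨w, hw, rfl⟩ := hw'
    have hli := H u hu v hv w hw
    have := Fintype.linearIndependent_iff.1 hli ![a, b * σ, c * τ] ?_
    · have h1 := this 0
      have h2 := this 1
      have h3 := this 2
      simp only [Matrix.cons_val_zero, Matrix.cons_val_one, Matrix.head_cons,
        Matrix.cons_val_two, Matrix.tail_cons] at h1 h2 h3
      have hb0 : b = 0 := by
        rcases mul_eq_zero.1 h2 with h | h; exact h; exact absurd h hσ0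
      have hc0 : c = 0 := by
        rcases mul_eq_zero.1 h3 with h | h; exact h; exact absurd h hτ0
      rw [h1, hb0, hc0] at habc; norm_num at habc
    · rw [Fin.sum_univ_three]
      simp only [Matrix.cons_val_zero, Matrix.cons_val_one, Matrix.head_cons,
        Matrix.cons_val_two, Matrix.tail_cons]
      rw [← heq]
      module
  have hconv : Convex ℝ (convexHull ℝ S) := convex_convexHull ℝ S
  have hclosed : IsClosed (convexHull ℝ S) := (hSfin.isCompact_convexHull ℝ).isClosed
  obtain ⟨f, r, hfr, hfb⟩ := geometric_hahn_banach_point_closed hconv hclosed h0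
  simp only [map_zero] at hfr
  set h : EuclideanSpace ℝ (Fin 3) := (InnerProductSpace.toDual ℝ _).symm f with hh
  have hinner : ∀ x, ⟪h, x⟫ = f x := fun x => InnerProductSpace.toDual_symm_apply
  have hpos : ∀ x ∈ S, 0 < ⟪h, x⟫ := by
    intro x hx
    rw [hinner]
    exact lt_trans hfr (hfb x (subset_convexHull ℝ S hx))
  refine ⟨h, fun g hg => hpos g (Or.inl (Or.inl hg)), fun g hg => ?_, fun g hg => ?_⟩
  · have := hpos (σ • g) (Or.inl (Or.inr ⟨g, hg, rfl⟩))
    rwa [real_inner_smul_right] at this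
  · have := hpos (τ • g) (Or.inr ⟨g, hg, rfl⟩)
    rwa [real_inner_smul_right] at this

/-- For nonempty finite sets `A, B, C ⊆ ℝ³`, every triple `(u, v, w)` with
`u ∈ hull A`, `v ∈ hull B`, `w ∈ hull C` is linearly independent (i.e. the matrix
`[u, v, w]` is invertible) if and only if the four half-space separation conditions with
vectors `h₁, h₂, h₃, h₄` hold. -/
theorem hull_independence_iff_halfspace_separation_3d
    (A B C : Set (EuclideanSpace ℝ (Fin 3)))
    (hAfin : A.Finite) (hBfin : B.Finite) (hCfin : C.Finite)
    (hAne : A.Nonempty) (hBne : B.Nonempty) (hCne : C.Nonempty) :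
    (∀ u ∈ convexHull ℝ A, ∀ v ∈ convexHull ℝ B, ∀ w ∈ convexHull ℝ C,
        LinearIndependent ℝ ![u, v, w]) ↔
      ((∃ h₁ : EuclideanSpace ℝ (Fin 3), ∀ f ∈ A ∪ B ∪ C, 0 < ⟪h₁, f⟫) ∧
       (∃ h₂ : EuclideanSpace ℝ (Fin 3),
          (∀ f ∈ A ∪ B, 0 < ⟪h₂, f⟫) ∧ (∀ f ∈ C, ⟪h₂, f⟫ < 0)) ∧
       (∃ h₃ : EuclideanSpace ℝ (Fin 3),
          (∀ f ∈ A ∪ C, 0 < ⟪h₃, f⟫) ∧ (∀ f ∈ B, ⟪h₃, f⟫ < 0)) ∧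
       (∃ h₄ : EuclideanSpace ℝ (Fin 3),
          (∀ f ∈ A, 0 < ⟪h₄, f⟫) ∧ (∀ f ∈ B ∪ C, ⟪h₄, f⟫ < 0))) := by
  constructor
  · intro H
    refine ⟨?_, ?_, ?_, ?_⟩
    · obtain ⟨h, hA, hB, hC⟩ := key_sep hAfin hBfin hCfin hAne hBne hCne H 1 1
        (Or.inl rfl) (Or.inl rfl)
      refine ⟨h, fun f hf => ?_⟩
      rcases hf with (hf | hf) | hf
      · exact hA f hf
      · have := hB f hf; linarith
      · have := hC f hf; linarith
    · obtain ⟨h, hA, hB, hC⟩ := key_sep hAfin hBfin hCfin hAne hBne hCne H 1 (-1)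
        (Or.inl rfl) (Or.inr rfl)
      refine ⟨h, fun f hf => ?_, fun f hf => ?_⟩
      · rcases hf with hf | hf
        · exact hA f hf
        · have := hB f hf; linarith
      · have := hC f hf; linarith
    · obtain ⟨h, hA, hB, hC⟩ := key_sep hAfin hBfin hCfin hAne hBne hCne H (-1) 1
        (Or.inr rfl) (Or.inl rfl)
      refine ⟨h, fun f hf => ?_, fun f hf => ?_⟩
      · rcases hf with hf | hf
        · exact hA f hf
        · have := hC f hf; linarith
      · have := hB f hf; linarith
    · obtain ⟨h, hA, hB, hC⟩ := key_sep hAfin hBfin hCfin hAne hBne hCne H (-1) (-1)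
        (Or.inr rfl) (Or.inr rfl)
      refine ⟨h, fun f hf => hA f hf, fun f hf => ?_⟩
      rcases hf with hf | hf
      · have := hB f hf; linarith
      · have := hC f hf; linarith
  · rintro ⟨⟨h₁, H1⟩, ⟨h₂, H2p, H2n⟩, ⟨h₃, H3p, H3n⟩, ⟨h₄, H4p, H4n⟩⟩
    intro u hu v hv w hw
    -- sign facts on hulls
    have x1 : 0 < ⟪h₁, u⟫ := inner_pos_hull (fun f hf => H1 f (Or.inl (Or.inl hf))) hu
    have y1 : 0 < ⟪h₁, v⟫ := inner_pos_hull (fun f hf => H1 f (Or.inl (Or.inr hf))) hv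
    have z1 : 0 < ⟪h₁, w⟫ := inner_pos_hull (fun f hf => H1 f (Or.inr hf)) hw
    have x2 : 0 < ⟪h₂, u⟫ := inner_pos_hull (fun f hf => H2p f (Or.inl hf)) hu
    have y2 : 0 < ⟪h₂, v⟫ := inner_pos_hull (fun f hf => H2p f (Or.inr hf)) hv
    have z2 : ⟪h₂, w⟫ < 0 := by
      have := inner_pos_hull (h := -h₂) (fun f hf => by
        rw [inner_neg_left]; linarith [H2n f hf]) hw
      rw [inner_neg_left] at this; linarith
    have x3 : 0 < ⟪h₃, u⟫ := inner_pos_hull (fun f hf => H3p f (Or.inl hf)) hu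
    have z3 : 0 < ⟪h₃, w⟫ := inner_pos_hull (fun f hf => H3p f (Or.inr hf)) hw
    have y3 : ⟪h₃, v⟫ < 0 := by
      have := inner_pos_hull (h := -h₃) (fun f hf => by
        rw [inner_neg_left]; linarith [H3n f hf]) hv
      rw [inner_neg_left] at this; linarith
    have x4 : 0 < ⟪h₄, u⟫ := inner_pos_hull H4p hu
    have y4 : ⟪h₄, v⟫ < 0 := by
      have := inner_pos_hull (h := -h₄) (fun f hf => by
        rw [inner_neg_left]; linarith [H4n f (Or.inl hf)]) hv
      rw [inner_neg_left] at this; linarith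
    have z4 : ⟪h₄, w⟫ < 0 := by
      have := inner_pos_hull (h := -h₄) (fun f hf => by
        rw [inner_neg_left]; linarith [H4n f (Or.inr hf)]) hw
      rw [inner_neg_left] at this; linarith
    rw [Fintype.linearIndependent_iff]
    intro g hg
    rw [Fin.sum_univ_three] at hg
    simp only [Matrix.cons_val_zero, Matrix.cons_val_one, Matrix.head_cons,
      Matrix.cons_val_two, Matrix.tail_cons] at hg
    set a := g 0; set b := g 1; set c := g 2
    have eq : ∀ h : EuclideanSpace ℝ (Fin 3),
        a * ⟪h, u⟫ + b * ⟪h, v⟫ + c * ⟪h, w⟫ = 0 := by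
      intro h
      have : ⟪h, a • u + b • v + c • w⟫ = (0:ℝ) := by rw [hg, inner_zero_right]
      rw [inner_add_right, inner_add_right, real_inner_smul_right, real_inner_smul_right,
        real_inner_smul_right] at this
      linarith
    have e1 := eq h₁; have e2 := eq h₂; have e3 := eq h₃; have e4 := eq h₄
    have habc : a = 0 ∧ b = 0 ∧ c = 0 := by
      rcases le_total 0 a with ha | ha <;> rcases le_total 0 b with hb | hb <;>
        rcases le_total 0 c with hc | hc
      · exact triple_zero x1 y1 z1 ha hb hc e1
      · obtain ⟨p1, p2, p3⟩ := triple_zero (a := a) (b := b) (c := -c)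
          x2 y2 (by linarith : (0:ℝ) < -⟪h₂, w⟫) ha hb (by linarith)
          (by linear_combination e2)
        exact ⟨p1, p2, by linarith⟩
      · obtain ⟨p1, p2, p3⟩ := triple_zero (a := a) (b := -b) (c := c)
          x3 (by linarith : (0:ℝ) < -⟪h₃, v⟫) z3 ha (by linarith) hc
          (by linear_combination e3)
        exact ⟨p1, by linarith, p3⟩
      · obtain ⟨p1, p2, p3⟩ := triple_zero (a := a) (b := -b) (c := -c)
          x4 (by linarith : (0:ℝ) < -⟪h₄, v⟫) (by linarith : (0:ℝ) < -⟪h₄, w⟫)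
          ha (by linarith) (by linarith) (by linear_combination e4)
        exact ⟨p1, by linarith, by linarith⟩
      · obtain ⟨p1, p2, p3⟩ := triple_zero (a := -a) (b := b) (c := c)
          x4 (by linarith : (0:ℝ) < -⟪h₄, v⟫) (by linarith : (0:ℝ) < -⟪h₄, w⟫)
          (by linarith) hb hc (by linear_combination -e4)
        exact ⟨by linarith, p2, p3⟩
      · obtain ⟨p1, p2, p3⟩ := triple_zero (a := -a) (b := b) (c := -c)
          x3 (by linarith : (0:ℝ) < -⟪h₃, v⟫) z3 (by linarith) hb (by linarith)
          (by linear_combination -e3)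
        exact ⟨by linarith, p2, by linarith⟩
      · obtain ⟨p1, p2, p3⟩ := triple_zero (a := -a) (b := -b) (c := c)
          x2 y2 (by linarith : (0:ℝ) < -⟪h₂, w⟫) (by linarith) (by linarith) hc
          (by linear_combination -e2)
        exact ⟨by linarith, by linarith, p3⟩
      · obtain ⟨p1, p2, p3⟩ := triple_zero (a := -a) (b := -b) (c := -c)
          x1 y1 z1 (by linarith) (by linarith) (by linarith)
          (by linear_combination -e1)
        exact ⟨by linarith, by linarith, by linarith⟩
    obtain ⟨ha0, hb0, hc0⟩ := habc
    intro i
    fin_cases i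
    · exact ha0
    · exact hb0
    · exact hc0
end

section
/- Let U ⊆ ℝ² be a convex set and let F : ℝ² → ℝ² be continuously differentiable on U. Suppose there exists h ∈ ℝ² such that for every x ∈ U, ⟨h, ∂F/∂ξ(x)⟩ > 0 and ⟨h, ∂F/∂η(x)⟩ > 0, and there exists h̄ ∈ ℝ² such that for every x ∈ U, ⟨h̄, ∂F/∂ξ(x)⟩ > 0 and ⟨h̄, ∂F/∂η(x)⟩ < 0. Then F is injective on U. -/
open scoped RealInnerProductSpace

/-- If `F : ℝ² → ℝ²` is `C¹` on a convex set `U` and there are vectors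
`h, h̄` such that at every point of `U` both columns of the Jacobian have positive inner
product with `h`, and the first column has positive and the second negative inner product
with `h̄`, then `F` is injective on `U`. -/
theorem injective_of_halfspace_jacobian_2d
    (U : Set (ℝ × ℝ)) (hU : Convex ℝ U)
    (F : ℝ × ℝ → EuclideanSpace ℝ (Fin 2)) (hF : ContDiffOn ℝ 1 F U)
    (h : EuclideanSpace ℝ (Fin 2))
    (hh : ∀ x ∈ U, 0 < ⟪h, fderiv ℝ F x (1, 0)⟫ ∧ 0 < ⟪h, fderiv ℝ F x (0, 1)⟫)
    (hbar : EuclideanSpace ℝ (Fin 2))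
    (hhbar : ∀ x ∈ U, 0 < ⟪hbar, fderiv ℝ F x (1, 0)⟫ ∧ ⟪hbar, fderiv ℝ F x (0, 1)⟫ < 0) :
    Set.InjOn F U := by
  intro u hu v hv hFeq
  by_contra hne
  have hdiff : ∀ x ∈ U, DifferentiableAt ℝ F x := by
    intro x hx
    by_contra hnd
    have hz := fderiv_zero_of_not_differentiableAt hnd
    have h1 := (hh x hx).1
    rw [hz] at h1
    simp at h1
  set d : ℝ × ℝ := v - u with hd
  have hdne : d ≠ 0 := sub_ne_zero.2 (Ne.symm hne)
  have hsplit : ∀ x ∈ U, ∀ w : EuclideanSpace ℝ (Fin 2),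
      ⟪w, fderiv ℝ F x d⟫ = d.1 * ⟪w, fderiv ℝ F x (1,0)⟫ + d.2 * ⟪w, fderiv ℝ F x (0,1)⟫ := by
    intro x hx w
    have hdd : d = d.1 • ((1:ℝ),(0:ℝ)) + d.2 • ((0:ℝ),(1:ℝ)) := by
      simp [Prod.ext_iff]
    conv_lhs => rw [hdd]
    rw [map_add, map_smul, map_smul, inner_add_right,
      real_inner_smul_right, real_inner_smul_right]
  have hd12 : d.1 ≠ 0 ∨ d.2 ≠ 0 := by
    by_contra hc
    push_neg at hc
    exact hdne (Prod.ext hc.1 hc.2)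
  obtain ⟨w, hw⟩ : ∃ w : EuclideanSpace ℝ (Fin 2), ∀ x ∈ U, 0 < ⟪w, fderiv ℝ F x d⟫ := by
    rcases le_or_gt 0 d.1 with h1 | h1
    · rcases le_or_gt 0 d.2 with h2 | h2
      · refine ⟨h, fun x hx => ?_⟩
        rw [hsplit x hx]
        obtain ⟨p1, p2⟩ := hh x hx
        rcases hd12 with hne1 | hne2
        · nlinarith [lt_of_le_of_ne h1 (Ne.symm hne1)]
        · nlinarith [lt_of_le_of_ne h2 (Ne.symm hne2)]
      · refine ⟨hbar, fun x hx => ?_⟩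
        rw [hsplit x hx]
        obtain ⟨q1, q2⟩ := hhbar x hx
        nlinarith
    · rcases le_or_gt 0 d.2 with h2 | h2
      · rcases h2.eq_or_lt with he2 | hl2
        · refine ⟨-h, fun x hx => ?_⟩
          rw [hsplit x hx, inner_neg_left, inner_neg_left]
          obtain ⟨p1, p2⟩ := hh x hx
          nlinarith
        · refine ⟨-hbar, fun x hx => ?_⟩
          rw [hsplit x hx, inner_neg_left, inner_neg_left]
          obtain ⟨q1, q2⟩ := hhbar x hx
          nlinarith
      · refine ⟨-h, fun x hx => ?_⟩
        rw [hsplit x hx, inner_neg_left, inner_neg_left]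
        obtain ⟨p1, p2⟩ := hh x hx
        nlinarith
  set g : ℝ → ℝ := fun t => ⟪w, F (u + t • d)⟫ with hg
  have hmem : ∀ t ∈ Set.Icc (0:ℝ) 1, u + t • d ∈ U := fun t ht =>
    hU.add_smul_sub_mem hu hv ht
  have hderiv : ∀ t ∈ Set.Icc (0:ℝ) 1,
      HasDerivAt g (⟪w, fderiv ℝ F (u + t • d) d⟫) t := by
    intro t ht
    have hγ : HasDerivAt (fun t : ℝ => u + t • d) d t := by
      simpa using ((hasDerivAt_id t).smul_const d).const_add u
    have hFγ : HasDerivAt (fun t : ℝ => F (u + t • d)) (fderiv ℝ F (u + t • d) d) t :=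
      ((hdiff _ (hmem t ht)).hasFDerivAt).comp_hasDerivAt t hγ
    exact ((innerSL ℝ w).hasFDerivAt.comp_hasDerivAt t hFγ)
  have hmono : StrictMonoOn g (Set.Icc 0 1) := by
    apply strictMonoOn_of_deriv_pos (convex_Icc 0 1)
    · exact fun t ht => (hderiv t ht).continuousAt.continuousWithinAt
    · intro t ht
      rw [interior_Icc] at ht
      rw [(hderiv t (Set.mem_Icc_of_Ioo ht)).deriv]
      exact hw _ (hmem t (Set.mem_Icc_of_Ioo ht))
  have h01 : g 0 < g 1 := hmono (Set.left_mem_Icc.2 zero_le_one)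
    (Set.right_mem_Icc.2 zero_le_one) zero_lt_one
  have hg0 : g 0 = ⟪w, F u⟫ := by simp [hg]
  have hg1 : g 1 = ⟪w, F v⟫ := by simp [hg, hd]
  rw [hg0, hg1, hFeq] at h01
  exact lt_irrefl _ h01
end

section
/- Let U ⊆ ℝ³ be a convex set and let F : ℝ³ → ℝ³ be continuously differentiable on U. Write F_ξ, F_η, F_ζ for the three partial derivatives (columns of the Jacobian) of F. Suppose there exist vectors h₁, h₂, h₃, h₄ ∈ ℝ³ such that for every x ∈ U: ⟨h₁, F_ξ(x)⟩ > 0, ⟨h₁, F_η(x)⟩ > 0, ⟨h₁, F_ζ(x)⟩ > 0; ⟨h₂, F_ξ(x)⟩ > 0, ⟨h₂, F_η(x)⟩ > 0, ⟨h₂, F_ζ(x)⟩ < 0; ⟨h₃, F_ξ(x)⟩ > 0, ⟨h₃, F_η(x)⟩ < 0, ⟨h₃, F_ζ(x)⟩ > 0; and ⟨h₄, F_ξ(x)⟩ > 0, ⟨h₄, F_η(x)⟩ < 0, ⟨h₄, F_ζ(x)⟩ < 0. Then F is injective on U. -/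
open scoped RealInnerProductSpace

lemma aux_strict {F : ℝ × ℝ × ℝ → EuclideanSpace ℝ (Fin 3)} {U : Set (ℝ × ℝ × ℝ)}
    (hU : Convex ℝ U) {h : EuclideanSpace ℝ (Fin 3)} {u v : ℝ × ℝ × ℝ}
    (hu : u ∈ U) (hv : v ∈ U)
    (hpos : ∀ x ∈ U, 0 < ⟪h, fderiv ℝ F x (v - u)⟫) : F u ≠ F v := by
  intro hFeq
  set g : ℝ → ℝ := fun t => ⟪h, F (u + t • (v - u))⟫ with hg
  have hmem : ∀ t ∈ Set.Icc (0:ℝ) 1, u + t • (v - u) ∈ U := fun t ht =>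
    hU.add_smul_sub_mem hu hv ht
  have hdiff : ∀ t ∈ Set.Icc (0:ℝ) 1,
      HasDerivAt g ⟪h, fderiv ℝ F (u + t • (v - u)) (v - u)⟫ t := by
    intro t ht
    have hx := hmem t ht
    have hDF : DifferentiableAt ℝ F (u + t • (v - u)) := by
      by_contra hnd
      have h0 := hpos _ hx
      rw [fderiv_zero_of_not_differentiableAt hnd] at h0
      simp at h0
    have hγ : HasDerivAt (fun s : ℝ => u + s • (v - u)) (v - u) t := by
      simpa using ((hasDerivAt_id t).smul_const (v - u)).const_add u
    have hFγ : HasDerivAt (fun s => F (u + s • (v - u)))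
        (fderiv ℝ F (u + t • (v - u)) (v - u)) t :=
      hDF.hasFDerivAt.comp_hasDerivAt t hγ
    have := (innerSL ℝ h).hasFDerivAt.comp_hasDerivAt t hFγ
    exact this
  have hcont : ContinuousOn g (Set.Icc 0 1) := fun t ht =>
    (hdiff t ht).continuousAt.continuousWithinAt
  have hmono : StrictMonoOn g (Set.Icc 0 1) := by
    apply strictMonoOn_of_deriv_pos (convex_Icc 0 1) hcont
    intro t ht
    rw [interior_Icc] at ht
    rw [(hdiff t (Set.mem_Icc_of_Ioo ht)).deriv]
    exact hpos _ (hmem t (Set.mem_Icc_of_Ioo ht))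
  have hlt := hmono (Set.left_mem_Icc.2 zero_le_one) (Set.right_mem_Icc.2 zero_le_one) zero_lt_one
  simp [g, hFeq] at hlt

lemma expand_inner {F : ℝ × ℝ × ℝ → EuclideanSpace ℝ (Fin 3)}
    (h : EuclideanSpace ℝ (Fin 3)) (x d : ℝ × ℝ × ℝ) :
    ⟪h, fderiv ℝ F x d⟫ =
      d.1 * ⟪h, fderiv ℝ F x (1, 0, 0)⟫ + d.2.1 * ⟪h, fderiv ℝ F x (0, 1, 0)⟫
        + d.2.2 * ⟪h, fderiv ℝ F x (0, 0, 1)⟫ := by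
  have hd : d = d.1 • ((1:ℝ), (0:ℝ), (0:ℝ)) + d.2.1 • ((0:ℝ), (1:ℝ), (0:ℝ))
      + d.2.2 • ((0:ℝ), (0:ℝ), (1:ℝ)) := by
    refine Prod.ext ?_ (Prod.ext ?_ ?_) <;> simp
  conv_lhs => rw [hd]
  rw [map_add, map_add, map_smul, map_smul, map_smul, inner_add_right, inner_add_right,
    real_inner_smul_right, real_inner_smul_right, real_inner_smul_right]

set_option maxHeartbeats 1600000 in
/-- If `F : ℝ³ → ℝ³` is `C¹` on a convex set `U` and there are vectors
`h₁, h₂, h₃, h₄` realizing the four sign patterns `(+,+,+), (+,+,−), (+,−,+), (+,−,−)`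
against the three columns of the Jacobian at every point of `U`, then `F` is injective
on `U`. -/
theorem injective_of_halfspace_jacobian_3d
    (U : Set (ℝ × ℝ × ℝ)) (hU : Convex ℝ U)
    (F : ℝ × ℝ × ℝ → EuclideanSpace ℝ (Fin 3)) (hF : ContDiffOn ℝ 1 F U)
    (h₁ h₂ h₃ h₄ : EuclideanSpace ℝ (Fin 3))
    (hh₁ : ∀ x ∈ U, 0 < ⟪h₁, fderiv ℝ F x (1, 0, 0)⟫ ∧
      0 < ⟪h₁, fderiv ℝ F x (0, 1, 0)⟫ ∧ 0 < ⟪h₁, fderiv ℝ F x (0, 0, 1)⟫)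
    (hh₂ : ∀ x ∈ U, 0 < ⟪h₂, fderiv ℝ F x (1, 0, 0)⟫ ∧
      0 < ⟪h₂, fderiv ℝ F x (0, 1, 0)⟫ ∧ ⟪h₂, fderiv ℝ F x (0, 0, 1)⟫ < 0)
    (hh₃ : ∀ x ∈ U, 0 < ⟪h₃, fderiv ℝ F x (1, 0, 0)⟫ ∧
      ⟪h₃, fderiv ℝ F x (0, 1, 0)⟫ < 0 ∧ 0 < ⟪h₃, fderiv ℝ F x (0, 0, 1)⟫)
    (hh₄ : ∀ x ∈ U, 0 < ⟪h₄, fderiv ℝ F x (1, 0, 0)⟫ ∧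
      ⟪h₄, fderiv ℝ F x (0, 1, 0)⟫ < 0 ∧ ⟪h₄, fderiv ℝ F x (0, 0, 1)⟫ < 0) :
    Set.InjOn F U := by
  intro u hu v hv hFeq
  by_contra hne
  have hd1 : (v - u).1 = v.1 - u.1 := rfl
  have hd2 : (v - u).2.1 = v.2.1 - u.2.1 := rfl
  have hd3 : (v - u).2.2 = v.2.2 - u.2.2 := rfl
  have he1 : (u - v).1 = -(v.1 - u.1) := by simp
  have he2 : (u - v).2.1 = -(v.2.1 - u.2.1) := by simp
  have he3 : (u - v).2.2 = -(v.2.2 - u.2.2) := by simp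
  set a := v.1 - u.1 with ha'
  set b := v.2.1 - u.2.1 with hb'
  set c := v.2.2 - u.2.2 with hc'
  have hnz : a ≠ 0 ∨ b ≠ 0 ∨ c ≠ 0 := by
    by_contra hz
    push_neg at hz
    obtain ⟨z1, z2, z3⟩ := hz
    apply hne
    refine Prod.ext ?_ (Prod.ext ?_ ?_) <;> [skip; skip; skip] <;>
      first
      | (have := z1; linarith [this])
      | (have := z2; linarith [this])
      | (have := z3; linarith [this])
  rcases le_or_gt 0 a with hA | hA
  · rcases le_or_gt 0 b with hB | hB
    · rcases le_or_gt 0 c with hC | hC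
      · -- pattern (+,+,+): h₁
        refine absurd hFeq (aux_strict (h := h₁) hU hu hv fun x hx => ?_)
        obtain ⟨p, q, r⟩ := hh₁ x hx
        rw [expand_inner, hd1, hd2, hd3]
        rcases hnz with hn | hn | hn
        · nlinarith [mul_pos (lt_of_le_of_ne hA (Ne.symm hn)) p, mul_nonneg hB q.le,
            mul_nonneg hC r.le]
        · nlinarith [mul_pos (lt_of_le_of_ne hB (Ne.symm hn)) q, mul_nonneg hA p.le,
            mul_nonneg hC r.le]
        · nlinarith [mul_pos (lt_of_le_of_ne hC (Ne.symm hn)) r, mul_nonneg hA p.le,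
            mul_nonneg hB q.le]
      · -- pattern (+,+,−): h₂
        refine absurd hFeq (aux_strict (h := h₂) hU hu hv fun x hx => ?_)
        obtain ⟨p, q, r⟩ := hh₂ x hx
        rw [expand_inner, hd1, hd2, hd3]
        nlinarith [mul_pos_of_neg_of_neg hC r, mul_nonneg hA p.le, mul_nonneg hB q.le]
    · rcases le_or_gt 0 c with hC | hC
      · -- pattern (+,−,+): h₃
        refine absurd hFeq (aux_strict (h := h₃) hU hu hv fun x hx => ?_)
        obtain ⟨p, q, r⟩ := hh₃ x hx
        rw [expand_inner, hd1, hd2, hd3]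
        nlinarith [mul_pos_of_neg_of_neg hB q, mul_nonneg hA p.le, mul_nonneg hC r.le]
      · -- pattern (+,−,−): h₄
        refine absurd hFeq (aux_strict (h := h₄) hU hu hv fun x hx => ?_)
        obtain ⟨p, q, r⟩ := hh₄ x hx
        rw [expand_inner, hd1, hd2, hd3]
        nlinarith [mul_pos_of_neg_of_neg hB q, mul_pos_of_neg_of_neg hC r, mul_nonneg hA p.le]
  · -- a < 0 : swap u and v, so direction (u - v) has positive first coordinate
    rcases le_or_gt 0 b with hB | hB
    · rcases le_or_gt 0 c with hC | hC
      · -- (−a, −b, −c) pattern (+,−,−): h₄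
        refine absurd hFeq.symm (aux_strict (h := h₄) hU hv hu fun x hx => ?_)
        obtain ⟨p, q, r⟩ := hh₄ x hx
        rw [expand_inner, he1, he2, he3]
        nlinarith [mul_pos (neg_pos.2 hA) p, mul_nonneg hB (neg_nonneg.2 q.le),
          mul_nonneg hC (neg_nonneg.2 r.le)]
      · -- (+,−,+): h₃
        refine absurd hFeq.symm (aux_strict (h := h₃) hU hv hu fun x hx => ?_)
        obtain ⟨p, q, r⟩ := hh₃ x hx
        rw [expand_inner, he1, he2, he3]
        nlinarith [mul_pos (neg_pos.2 hA) p, mul_nonneg hB (neg_nonneg.2 q.le),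
          mul_pos (neg_pos.2 hC) r]
    · rcases le_or_gt 0 c with hC | hC
      · -- (+,+,−): h₂
        refine absurd hFeq.symm (aux_strict (h := h₂) hU hv hu fun x hx => ?_)
        obtain ⟨p, q, r⟩ := hh₂ x hx
        rw [expand_inner, he1, he2, he3]
        nlinarith [mul_pos (neg_pos.2 hA) p, mul_pos (neg_pos.2 hB) q,
          mul_nonneg hC (neg_nonneg.2 r.le)]
      · -- (+,+,+): h₁
        refine absurd hFeq.symm (aux_strict (h := h₁) hU hv hu fun x hx => ?_)
        obtain ⟨p, q, r⟩ := hh₁ x hx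
        rw [expand_inner, he1, he2, he3]
        nlinarith [mul_pos (neg_pos.2 hA) p, mul_pos (neg_pos.2 hB) q, mul_pos (neg_pos.2 hC) r]
end

section
/- Let p ≥ 1 be an integer and let f_{i,j} ∈ ℝ² for integers i, j ≥ 0 with i + j ≤ p. Define F : ℝ² → ℝ² by F(ξ,η) = Σ_{i=0}^{p} Σ_{j=0}^{p−i} f_{i,j} ξ^i η^j (1−ξ−η)^{p−i−j} · p!/(i! j! (p−i−j)!). Let G_ξ = {p(f_{i+1,j} − f_{i,j}) : i, j ≥ 0, i + j ≤ p−1} and G_η = {p(f_{i,j+1} − f_{i,j}) : i, j ≥ 0, i + j ≤ p−1}. Suppose there exists h ∈ ℝ² with ⟨h, g⟩ > 0 for all g ∈ G_ξ ∪ G_η, and there exists h̄ ∈ ℝ² with ⟨h̄, g⟩ > 0 for all g ∈ G_ξ and ⟨h̄, g⟩ < 0 for all g ∈ G_η. Then F is injective on the reference triangle Δ² = {(ξ,η) : ξ ≥ 0, η ≥ 0, ξ + η ≤ 1}. -/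
open scoped RealInnerProductSpace

open Finset
noncomputable def tco (n i j : ℕ) : ℝ :=
  (Nat.factorial n : ℝ) /
    ((Nat.factorial i : ℝ) * (Nat.factorial j : ℝ) * (Nat.factorial (n - i - j) : ℝ))

lemma tco_nonneg (n i j : ℕ) : 0 ≤ tco n i j := by
  unfold tco
  have h1 : (0:ℝ) < n.factorial := by exact_mod_cast n.factorial_pos
  have h2 : (0:ℝ) < i.factorial := by exact_mod_cast i.factorial_pos
  have h3 : (0:ℝ) < j.factorial := by exact_mod_cast j.factorial_pos
  have h4 : (0:ℝ) < (n-i-j).factorial := by exact_mod_cast (n-i-j).factorial_pos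
  positivity

lemma trinomial (n : ℕ) (a b c : ℝ) :
    ∑ i ∈ range (n+1), ∑ j ∈ range (n - i + 1), a^i * b^j * c^(n-i-j) * tco n i j
      = (a+b+c)^n := by
  have : (a+b+c)^n = (a + (b+c))^n := by ring_nf
  rw [this, add_pow]
  refine Finset.sum_congr rfl (fun i hi => ?_)
  rw [mem_range] at hi
  have hin : i ≤ n := by omega
  rw [add_pow, Finset.mul_sum, Finset.sum_mul]
  refine Finset.sum_congr rfl (fun j hj => ?_)
  rw [mem_range] at hj
  have hjn : j ≤ n - i := by omega
  have e1 : (n.choose i : ℝ) = n.factorial / (i.factorial * (n-i).factorial) :=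
    Nat.cast_choose ℝ hin
  have e2 : ((n-i).choose j : ℝ) = (n-i).factorial / (j.factorial * (n-i-j).factorial) := by
    rw [Nat.cast_choose ℝ hjn]
  have h2 : (0:ℝ) < i.factorial := by exact_mod_cast i.factorial_pos
  have h3 : (0:ℝ) < j.factorial := by exact_mod_cast j.factorial_pos
  have h4 : (0:ℝ) < (n-i-j).factorial := by exact_mod_cast (n-i-j).factorial_pos
  have h5 : (0:ℝ) < (n-i).factorial := by exact_mod_cast (n-i).factorial_pos
  unfold tco
  rw [e1, e2]
  field_simp

lemma tco_left (p i j : ℕ) (h : i + j + 1 ≤ p) :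
    ((i:ℝ)+1) * tco p (i+1) j = p * tco (p-1) i j := by
  obtain ⟨q, rfl⟩ : ∃ q, p = q + 1 := ⟨p-1, by omega⟩
  unfold tco
  simp only [Nat.add_sub_cancel]
  have e1 : q + 1 - (i+1) - j = q - i - j := by omega
  rw [e1, Nat.factorial_succ q, Nat.factorial_succ i]
  have h2 : (0:ℝ) < i.factorial := by exact_mod_cast i.factorial_pos
  have h3 : (0:ℝ) < j.factorial := by exact_mod_cast j.factorial_pos
  have h4 : (0:ℝ) < (q-i-j).factorial := by exact_mod_cast (q-i-j).factorial_pos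
  push_cast
  field_simp

lemma tco_right (p i j : ℕ) (h : i + j + 1 ≤ p) :
    ((j:ℝ)+1) * tco p i (j+1) = p * tco (p-1) i j := by
  obtain ⟨q, rfl⟩ : ∃ q, p = q + 1 := ⟨p-1, by omega⟩
  unfold tco
  simp only [Nat.add_sub_cancel]
  have e1 : q + 1 - i - (j+1) = q - i - j := by omega
  rw [e1, Nat.factorial_succ q, Nat.factorial_succ j]
  have h2 : (0:ℝ) < i.factorial := by exact_mod_cast i.factorial_pos
  have h3 : (0:ℝ) < j.factorial := by exact_mod_cast j.factorial_pos
  have h4 : (0:ℝ) < (q-i-j).factorial := by exact_mod_cast (q-i-j).factorial_pos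
  push_cast
  field_simp

lemma tco_mid (p i j : ℕ) (h : i + j + 1 ≤ p) :
    ((p - i - j : ℕ):ℝ) * tco p i j = p * tco (p-1) i j := by
  obtain ⟨q, rfl⟩ : ∃ q, p = q + 1 := ⟨p-1, by omega⟩
  unfold tco
  simp only [Nat.add_sub_cancel]
  have e1 : q + 1 - i - j = (q - i - j) + 1 := by omega
  rw [e1, Nat.factorial_succ q, Nat.factorial_succ (q-i-j)]
  have h2 : (0:ℝ) < i.factorial := by exact_mod_cast i.factorial_pos
  have h3 : (0:ℝ) < j.factorial := by exact_mod_cast j.factorial_pos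
  have h4 : (0:ℝ) < (q-i-j).factorial := by exact_mod_cast (q-i-j).factorial_pos
  have h5 : (0:ℝ) < ((q-i-j:ℕ):ℝ) + 1 := by positivity
  push_cast
  field_simp

lemma reindex (p : ℕ) (u : ℕ → ℕ → ℝ) (d1 d2 a b c : ℝ) :
    ∑ i ∈ range (p+1), ∑ j ∈ range (p-i+1),
      (d1 * i * a^(i-1) * b^j * c^(p-i-j) * tco p i j * u i j
       + d2 * j * a^i * b^(j-1) * c^(p-i-j) * tco p i j * u i j
       + (-d1-d2) * ((p-i-j : ℕ):ℝ) * a^i * b^j * c^(p-i-j-1) * tco p i j * u i j)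
    = (p:ℝ) * ∑ i ∈ range p, ∑ j ∈ range (p-i),
        a^i * b^j * c^(p-1-i-j) * tco (p-1) i j *
          (d1 * (u (i+1) j - u i j) + d2 * (u i (j+1) - u i j)) := by
  have split : ∀ (s : Finset ℕ) (g1 g2 g3 : ℕ → ℝ),
      ∑ j ∈ s, (g1 j + g2 j + g3 j) = (∑ j ∈ s, g1 j) + (∑ j ∈ s, g2 j) + (∑ j ∈ s, g3 j) := by
    intro s g1 g2 g3; rw [Finset.sum_add_distrib, Finset.sum_add_distrib]
  -- split outer and inner sums
  rw [show (∑ i ∈ range (p+1), ∑ j ∈ range (p-i+1),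
      (d1 * i * a^(i-1) * b^j * c^(p-i-j) * tco p i j * u i j
       + d2 * j * a^i * b^(j-1) * c^(p-i-j) * tco p i j * u i j
       + (-d1-d2) * ((p-i-j : ℕ):ℝ) * a^i * b^j * c^(p-i-j-1) * tco p i j * u i j))
    = (∑ i ∈ range (p+1), ∑ j ∈ range (p-i+1), d1 * i * a^(i-1) * b^j * c^(p-i-j) * tco p i j * u i j)
    + (∑ i ∈ range (p+1), ∑ j ∈ range (p-i+1), d2 * j * a^i * b^(j-1) * c^(p-i-j) * tco p i j * u i j)
    + (∑ i ∈ range (p+1), ∑ j ∈ range (p-i+1), (-d1-d2) * ((p-i-j : ℕ):ℝ) * a^i * b^j * c^(p-i-j-1) * tco p i j * u i j) from by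
      rw [← Finset.sum_add_distrib, ← Finset.sum_add_distrib]
      exact Finset.sum_congr rfl fun i _ => split _ _ _ _]
  -- S1
  have hS1 : (∑ i ∈ range (p+1), ∑ j ∈ range (p-i+1),
        d1 * i * a^(i-1) * b^j * c^(p-i-j) * tco p i j * u i j)
      = ∑ i ∈ range p, ∑ j ∈ range (p-i),
          (p:ℝ) * (a^i * b^j * c^(p-1-i-j) * tco (p-1) i j) * d1 * u (i+1) j := by
    rw [Finset.sum_range_succ']
    have h0 : (∑ j ∈ range (p-0+1), d1 * (0:ℕ) * a^(0-1) * b^j * c^(p-0-j) * tco p 0 j * u 0 j) = 0 := by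
      simp
    rw [h0, add_zero]
    refine Finset.sum_congr rfl fun i hi => ?_
    rw [mem_range] at hi
    have e : p - (i+1) + 1 = p - i := by omega
    rw [e]
    refine Finset.sum_congr rfl fun j hj => ?_
    rw [mem_range] at hj
    have h1 : i + j + 1 ≤ p := by omega
    have e2 : (i+1) - 1 = i := by omega
    have e3 : p - (i+1) - j = p - 1 - i - j := by omega
    rw [e2, e3]
    have := tco_left p i j h1
    push_cast
    linear_combination (d1 * a^i * b^j * c^(p-1-i-j) * u (i+1) j) * this
  -- S2
  have hS2 : (∑ i ∈ range (p+1), ∑ j ∈ range (p-i+1),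
        d2 * j * a^i * b^(j-1) * c^(p-i-j) * tco p i j * u i j)
      = ∑ i ∈ range p, ∑ j ∈ range (p-i),
          (p:ℝ) * (a^i * b^j * c^(p-1-i-j) * tco (p-1) i j) * d2 * u i (j+1) := by
    rw [Finset.sum_range_succ]
    have h0 : (∑ j ∈ range (p-p+1), d2 * j * a^p * b^(j-1) * c^(p-p-j) * tco p p j * u p j) = 0 := by
      simp
    rw [h0, add_zero]
    refine Finset.sum_congr rfl fun i hi => ?_
    rw [mem_range] at hi
    rw [Finset.sum_range_succ']
    have h0' : d2 * (0:ℕ) * a^i * b^(0-1) * c^(p-i-0) * tco p i 0 * u i 0 = 0 := by simp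
    rw [h0', add_zero]
    refine Finset.sum_congr rfl fun j hj => ?_
    rw [mem_range] at hj
    have h1 : i + j + 1 ≤ p := by omega
    have e2 : (j+1) - 1 = j := by omega
    have e3 : p - i - (j+1) = p - 1 - i - j := by omega
    rw [e2, e3]
    have := tco_right p i j h1
    push_cast
    linear_combination (d2 * a^i * b^j * c^(p-1-i-j) * u i (j+1)) * this
  -- S3
  have hS3 : (∑ i ∈ range (p+1), ∑ j ∈ range (p-i+1),
        (-d1-d2) * ((p-i-j : ℕ):ℝ) * a^i * b^j * c^(p-i-j-1) * tco p i j * u i j)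
      = ∑ i ∈ range p, ∑ j ∈ range (p-i),
          (p:ℝ) * (a^i * b^j * c^(p-1-i-j) * tco (p-1) i j) * (-d1-d2) * u i j := by
    rw [Finset.sum_range_succ]
    have h0 : (∑ j ∈ range (p-p+1), (-d1-d2) * ((p-p-j:ℕ):ℝ) * a^p * b^j * c^(p-p-j-1) * tco p p j * u p j) = 0 := by
      simp
    rw [h0, add_zero]
    refine Finset.sum_congr rfl fun i hi => ?_
    rw [mem_range] at hi
    rw [Finset.sum_range_succ]
    have h0' : (-d1-d2) * ((p-i-(p-i):ℕ):ℝ) * a^i * b^(p-i) * c^(p-i-(p-i)-1) * tco p i (p-i) * u i (p-i) = 0 := by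
      simp [Nat.sub_self]
    rw [h0', add_zero]
    refine Finset.sum_congr rfl fun j hj => ?_
    rw [mem_range] at hj
    have h1 : i + j + 1 ≤ p := by omega
    have e3 : p - i - j - 1 = p - 1 - i - j := by omega
    rw [e3]
    have := tco_mid p i j h1
    linear_combination ((-d1-d2) * a^i * b^j * c^(p-1-i-j) * u i j) * this
  rw [hS1, hS2, hS3, Finset.mul_sum, ← Finset.sum_add_distrib, ← Finset.sum_add_distrib]
  refine Finset.sum_congr rfl fun i _ => ?_
  rw [Finset.mul_sum, ← Finset.sum_add_distrib, ← Finset.sum_add_distrib]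
  refine Finset.sum_congr rfl fun j _ => ?_
  ring

noncomputable def bern (p : ℕ) (u : ℕ → ℕ → ℝ) (s r : ℝ) : ℝ :=
  ∑ i ∈ range (p+1), ∑ j ∈ range (p-i+1),
    s^i * r^j * (1-s-r)^(p-i-j) * tco p i j * u i j

lemma bern_hasDeriv (p : ℕ) (u : ℕ → ℕ → ℝ) (x1 x2 d1 d2 t : ℝ) :
    HasDerivAt (fun t => bern p u (x1+t*d1) (x2+t*d2))
      (∑ i ∈ range (p+1), ∑ j ∈ range (p-i+1),
        (d1 * i * (x1+t*d1)^(i-1) * (x2+t*d2)^j * (1-(x1+t*d1)-(x2+t*d2))^(p-i-j) * tco p i j * u i j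
         + d2 * j * (x1+t*d1)^i * (x2+t*d2)^(j-1) * (1-(x1+t*d1)-(x2+t*d2))^(p-i-j) * tco p i j * u i j
         + (-d1-d2) * ((p-i-j:ℕ):ℝ) * (x1+t*d1)^i * (x2+t*d2)^j * (1-(x1+t*d1)-(x2+t*d2))^(p-i-j-1) * tco p i j * u i j)) t := by
  have hA : HasDerivAt (fun t : ℝ => x1 + t*d1) d1 t := by
    simpa using ((hasDerivAt_id t).mul_const d1).const_add x1
  have hB : HasDerivAt (fun t : ℝ => x2 + t*d2) d2 t := by
    simpa using ((hasDerivAt_id t).mul_const d2).const_add x2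
  have hC : HasDerivAt (fun t : ℝ => 1 - (x1+t*d1) - (x2+t*d2)) (-d1-d2) t := by
    simpa using ((hasDerivAt_const t (1:ℝ)).fun_sub hA).fun_sub hB
  unfold bern
  refine HasDerivAt.fun_sum fun i _ => HasDerivAt.fun_sum fun j _ => ?_
  have key := ((((hA.fun_pow i).fun_mul (hB.fun_pow j)).fun_mul (hC.fun_pow (p-i-j))).mul_const
      (tco p i j)).mul_const (u i j)
  convert key using 1
  · rfl
  ring

lemma bern_lt (p : ℕ) (hp : 1 ≤ p) (u : ℕ → ℕ → ℝ) (x1 x2 y1 y2 : ℝ)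
    (hx1 : 0 ≤ x1) (hx2 : 0 ≤ x2) (hx3 : x1 + x2 ≤ 1)
    (hy1 : 0 ≤ y1) (hy2 : 0 ≤ y2) (hy3 : y1 + y2 ≤ 1)
    (hc : ∀ i j, i + j + 1 ≤ p →
      0 < (y1-x1) * (u (i+1) j - u i j) + (y2-x2) * (u i (j+1) - u i j)) :
    bern p u x1 x2 < bern p u y1 y2 := by
  set d1 := y1 - x1 with hd1
  set d2 := y2 - x2 with hd2
  set φ : ℝ → ℝ := fun t => bern p u (x1+t*d1) (x2+t*d2) with hφ
  have hder := fun t => bern_hasDeriv p u x1 x2 d1 d2 t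
  have hpos : ∀ t ∈ interior (Set.Icc (0:ℝ) 1), 0 < deriv φ t := by
    intro t ht
    rw [interior_Icc] at ht
    rw [(hder t).deriv, reindex p u d1 d2]
    set a := x1 + t*d1 with ha'
    set b := x2 + t*d2 with hb'
    have ha : 0 ≤ a := by rw [ha', hd1]; nlinarith [ht.1.le, ht.2.le]
    have hb : 0 ≤ b := by rw [hb', hd2]; nlinarith [ht.1.le, ht.2.le]
    have hcc : 0 ≤ 1 - a - b := by rw [ha', hb', hd1, hd2]; nlinarith [ht.1.le, ht.2.le]
    have habc : a + b + (1-a-b) = 1 := by ring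
    have h1 := trinomial (p-1) a b (1-a-b)
    rw [habc, one_pow, show p-1+1 = p from by omega] at h1
    have hsum1 : ∑ i ∈ range p, ∑ j ∈ range (p-i),
        a^i * b^j * (1-a-b)^(p-1-i-j) * tco (p-1) i j = 1 := by
      have e : (∑ i ∈ range p, ∑ j ∈ range (p-i),
          a^i * b^j * (1-a-b)^(p-1-i-j) * tco (p-1) i j)
          = ∑ i ∈ range p, ∑ j ∈ range (p-1-i+1),
              a^i * b^j * (1-a-b)^(p-1-i-j) * tco (p-1) i j := by
        refine Finset.sum_congr rfl fun i hi => ?_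
        rw [mem_range] at hi
        rw [show p-1-i+1 = p-i from by omega]
      rw [e, h1]
    set S := (range p).sigma (fun i => range (p-i)) with hS
    have hne : S.Nonempty := ⟨⟨0,0⟩, by simp [hS, Finset.mem_sigma]; omega⟩
    set w : (Σ _ : ℕ, ℕ) → ℝ := fun q => a^q.1 * b^q.2 * (1-a-b)^(p-1-q.1-q.2) * tco (p-1) q.1 q.2 with hw
    set cv : (Σ _ : ℕ, ℕ) → ℝ := fun q =>
      d1 * (u (q.1+1) q.2 - u q.1 q.2) + d2 * (u q.1 (q.2+1) - u q.1 q.2) with hcv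
    rw [Finset.sum_sigma'] at hsum1 ⊢
    have hwpos : ∀ q ∈ S, 0 ≤ w q := by
      intro q _
      have := tco_nonneg (p-1) q.1 q.2
      rw [hw]
      positivity
    have hcvpos : ∀ q ∈ S, 0 < cv q := by
      intro q hq
      rw [hS, Finset.mem_sigma, mem_range, mem_range] at hq
      exact hc q.1 q.2 (by omega)
    set m := S.inf' hne cv with hm'
    have hm : 0 < m := by
      rw [hm', Finset.lt_inf'_iff]
      exact hcvpos
    have hle : (∑ q ∈ S, w q) * m ≤ ∑ q ∈ S, w q * cv q := by
      rw [Finset.sum_mul]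
      exact Finset.sum_le_sum fun q hq =>
        mul_le_mul_of_nonneg_left (Finset.inf'_le cv hq) (hwpos q hq)
    rw [hsum1, one_mul] at hle
    have hsum : 0 < ∑ q ∈ S, w q * cv q := lt_of_lt_of_le hm hle
    have hp0 : (0:ℝ) < p := by exact_mod_cast hp
    have : (∑ q ∈ S, w q * cv q) = ∑ q ∈ S,
        a^q.1 * b^q.2 * (1-a-b)^(p-1-q.1-q.2) * tco (p-1) q.1 q.2 *
          (d1 * (u (q.1+1) q.2 - u q.1 q.2) + d2 * (u q.1 (q.2+1) - u q.1 q.2)) := rfl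
    rw [this] at hsum
    positivity
  have smono : StrictMonoOn φ (Set.Icc (0:ℝ) 1) :=
    strictMonoOn_of_deriv_pos (convex_Icc 0 1)
      (fun t _ => (hder t).continuousAt.continuousWithinAt) hpos
  have key := smono (Set.left_mem_Icc.2 zero_le_one) (Set.right_mem_Icc.2 zero_le_one) zero_lt_one
  have e0 : x1 + 0*d1 = x1 := by ring
  have e0' : x2 + 0*d2 = x2 := by ring
  have e1 : x1 + 1*d1 = y1 := by rw [hd1]; ring
  have e1' : x2 + 1*d2 = y2 := by rw [hd2]; ring
  simp only [hφ, e0, e0', e1, e1'] at key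
  exact key

open scoped RealInnerProductSpace

lemma inner_F (p : ℕ) (f : ℕ → ℕ → EuclideanSpace ℝ (Fin 2))
    (v : EuclideanSpace ℝ (Fin 2)) (x1 x2 : ℝ) :
    ⟪v, ∑ i ∈ range (p+1), ∑ j ∈ range (p-i+1),
      (x1^i * x2^j * (1-x1-x2)^(p-i-j) * ((Nat.factorial p : ℝ) /
        ((Nat.factorial i : ℝ) * (Nat.factorial j : ℝ) * (Nat.factorial (p-i-j) : ℝ)))) • f i j⟫
    = bern p (fun i j => ⟪v, f i j⟫) x1 x2 := by
  unfold bern tco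
  rw [inner_sum]
  refine Finset.sum_congr rfl fun i _ => ?_
  rw [inner_sum]
  refine Finset.sum_congr rfl fun j _ => ?_
  rw [real_inner_smul_right]


set_option maxHeartbeats 1000000

/-- For a total-degree-`p` Bernstein–Bézier mapping `F : ℝ² → ℝ²`, if there
is a vector `h` with positive inner product against every vector in `G_ξ ∪ G_η`, and a
vector `h̄` with positive inner product against `G_ξ` and negative against `G_η`, then `F`
is injective on the reference triangle `Δ²`. -/
theorem bernstein_bezier_injective_of_halfspace_condition
    (p : ℕ) (hp : 1 ≤ p) (f : ℕ → ℕ → EuclideanSpace ℝ (Fin 2))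
    (F : ℝ × ℝ → EuclideanSpace ℝ (Fin 2))
    (hF : F = fun x => ∑ i ∈ Finset.range (p + 1), ∑ j ∈ Finset.range (p - i + 1),
      (x.1 ^ i * x.2 ^ j * (1 - x.1 - x.2) ^ (p - i - j) *
        ((Nat.factorial p : ℝ) /
          ((Nat.factorial i : ℝ) * (Nat.factorial j : ℝ) * (Nat.factorial (p - i - j) : ℝ)))) • f i j)
    (Gξ Gη : Set (EuclideanSpace ℝ (Fin 2)))
    (hGξ : Gξ = {g | ∃ i j, i + j ≤ p - 1 ∧ g = (p : ℝ) • (f (i + 1) j - f i j)})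
    (hGη : Gη = {g | ∃ i j, i + j ≤ p - 1 ∧ g = (p : ℝ) • (f i (j + 1) - f i j)})
    (h : EuclideanSpace ℝ (Fin 2)) (hh : ∀ g ∈ Gξ ∪ Gη, 0 < ⟪h, g⟫)
    (hbar : EuclideanSpace ℝ (Fin 2))
    (hhbar : (∀ g ∈ Gξ, 0 < ⟪hbar, g⟫) ∧ (∀ g ∈ Gη, ⟪hbar, g⟫ < 0)) :
    Set.InjOn F {x : ℝ × ℝ | 0 ≤ x.1 ∧ 0 ≤ x.2 ∧ x.1 + x.2 ≤ 1} := by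
  have hp0 : (0:ℝ) < p := by exact_mod_cast hp
  -- basic inner-product positivity facts
  have hδξ : ∀ i j, i + j + 1 ≤ p → 0 < ⟪h, f (i+1) j - f i j⟫ := by
    intro i j hij
    have hg : (p:ℝ) • (f (i+1) j - f i j) ∈ Gξ ∪ Gη :=
      Or.inl (by rw [hGξ]; exact ⟨i, j, by omega, rfl⟩)
    have := hh _ hg
    rw [real_inner_smul_right] at this
    nlinarith
  have hδη : ∀ i j, i + j + 1 ≤ p → 0 < ⟪h, f i (j+1) - f i j⟫ := by
    intro i j hij
    have hg : (p:ℝ) • (f i (j+1) - f i j) ∈ Gξ ∪ Gη :=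
      Or.inr (by rw [hGη]; exact ⟨i, j, by omega, rfl⟩)
    have := hh _ hg
    rw [real_inner_smul_right] at this
    nlinarith
  have hbξ : ∀ i j, i + j + 1 ≤ p → 0 < ⟪hbar, f (i+1) j - f i j⟫ := by
    intro i j hij
    have := hhbar.1 _ (by rw [hGξ]; exact ⟨i, j, by omega, rfl⟩)
    rw [real_inner_smul_right] at this
    nlinarith
  have hbη : ∀ i j, i + j + 1 ≤ p → ⟪hbar, f i (j+1) - f i j⟫ < 0 := by
    intro i j hij
    have := hhbar.2 _ (by rw [hGη]; exact ⟨i, j, by omega, rfl⟩)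
    rw [real_inner_smul_right] at this
    nlinarith
  intro x hx y hy hFeq
  by_contra hne
  simp only [Set.mem_setOf_eq] at hx hy
  -- main tool
  have main : ∀ v : EuclideanSpace ℝ (Fin 2),
      (∀ i j, i + j + 1 ≤ p →
        0 < (y.1 - x.1) * ⟪v, f (i+1) j - f i j⟫ + (y.2 - x.2) * ⟪v, f i (j+1) - f i j⟫) →
      False := by
    intro v hv
    have e1 : ⟪v, F x⟫ = bern p (fun i j => ⟪v, f i j⟫) x.1 x.2 := by
      rw [hF]; exact inner_F p f v x.1 x.2
    have e2 : ⟪v, F y⟫ = bern p (fun i j => ⟪v, f i j⟫) y.1 y.2 := by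
      rw [hF]; exact inner_F p f v y.1 y.2
    have hlt := bern_lt p hp (fun i j => ⟪v, f i j⟫) x.1 x.2 y.1 y.2
      hx.1 hx.2.1 hx.2.2 hy.1 hy.2.1 hy.2.2
      (by intro i j hij; simpa [inner_sub_right] using hv i j hij)
    rw [← e1, ← e2, hFeq] at hlt
    exact lt_irrefl _ hlt
  set d1 := y.1 - x.1 with hd1
  set d2 := y.2 - x.2 with hd2
  have hd : ¬ (d1 = 0 ∧ d2 = 0) := by
    rintro ⟨e1, e2⟩
    apply hne
    have : x.1 = y.1 := by rw [hd1] at e1; linarith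
    have : x.2 = y.2 := by rw [hd2] at e2; linarith
    exact Prod.ext (by linarith [‹x.1 = y.1›]) this
  rcases le_or_gt 0 d1 with h1 | h1 <;> rcases le_or_gt 0 d2 with h2 | h2
  · -- 0 ≤ d1, 0 ≤ d2 : use h
    have hor : 0 < d1 ∨ 0 < d2 := by
      by_contra hcon
      push_neg at hcon
      exact hd ⟨le_antisymm hcon.1 h1, le_antisymm hcon.2 h2⟩
    refine main h fun i j hij => ?_
    have A := hδξ i j hij
    have B := hδη i j hij
    rcases hor with h3 | h3 <;> nlinarith
  · -- 0 ≤ d1, d2 < 0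
    rcases h1.eq_or_lt with h1' | h1'
    · -- d1 = 0 : use -h
      refine main (-h) fun i j hij => ?_
      have A := hδξ i j hij
      have B := hδη i j hij
      rw [inner_neg_left, inner_neg_left]
      nlinarith
    · -- 0 < d1 : use hbar
      refine main hbar fun i j hij => ?_
      have A := hbξ i j hij
      have B := hbη i j hij
      nlinarith
  · -- d1 < 0, 0 ≤ d2
    rcases h2.eq_or_lt with h2' | h2'
    · -- d2 = 0 : use -h
      refine main (-h) fun i j hij => ?_
      have A := hδξ i j hij
      have B := hδη i j hij
      rw [inner_neg_left, inner_neg_left]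
      nlinarith
    · -- 0 < d2 : use -hbar
      refine main (-hbar) fun i j hij => ?_
      have A := hbξ i j hij
      have B := hbη i j hij
      rw [inner_neg_left, inner_neg_left]
      nlinarith
  · -- d1 < 0, d2 < 0 : use -h
    refine main (-h) fun i j hij => ?_
    have A := hδξ i j hij
    have B := hδη i j hij
    rw [inner_neg_left, inner_neg_left]
    nlinarith
end
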